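/- Let φ : H → G be a group homomorphism, 𝓕 a family of subgroups of G, K and M cocomplete categories, F : K → M a functor preserving arbitrary coproducts, and D : BH → K a functor. Then the assembly map As_{φ*𝓕, FD_H} : colim_{H_{φ*𝓕}Orb} FD_H → FD_H(H/H) is isomorphic, as an object of the arrow category of M, to the assembly map As_{𝓕, F(Bφ_!D)_G} : colim_{G_𝓕Orb} F(Bφ_!D)_G → F(Bφ_!D)_G(G/G). -/

import Mathlib

/-!
Statement 12: the assembly maps As_{φ*𝓕, FD_H} and As_{𝓕, F(Bφ_!D)_G} agree in the arrow category.

Throughout, `GOrb G` is the orbit category of the group `G` (objects: nonempty transitive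
`G`-sets; morphisms: equivariant maps), `GOrb.pt G` its terminal object `G/G`,
`SubgroupFamily G` the families of subgroups, `FamOrb G 𝓕` the full subcategory `G_𝓕Orb`,
`PSh G` the presheaf category, `asm` the assembly map, `jG : BG ⥤ GOrb` the canonical
inclusion (`BG = SingleObj G`), and left Kan extensions are encoded by a functor together
with a natural transformation exhibiting it as a left Kan extension
(`Functor.IsLeftKanExtension`).  Cocompleteness is expressed by `HasColimitsOfSize.{u, u+1}`,
the size of the orbit category and its subcategories.
-/

open CategoryTheory Limits

universe u v w v' w'

namespace FJ

variable (G : Type u) [Group G]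

/-- The orbit category of `G`: objects are (nonempty) transitive `G`-sets, morphisms are
`G`-equivariant maps. -/
structure GOrb : Type (u + 1) where
  α : Type u
  [act : MulAction G α]
  pretrans : MulAction.IsPretransitive G α
  nonempty : Nonempty α

attribute [instance] GOrb.act

variable {G}

/-- Equivariant maps of transitive `G`-sets. -/
@[ext]
structure OrbHom (X Y : GOrb G) : Type u where
  toFun : X.α → Y.α
  map_smul : ∀ (g : G) (x : X.α), toFun (g • x) = g • toFun x

instance : Category.{u} (GOrb G) where
  Hom X Y := OrbHom X Y
  id X := ⟨_root_.id, fun _ _ => rfl⟩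
  comp f g := ⟨g.toFun ∘ f.toFun, fun a x => by
    simp only [Function.comp_apply, f.map_smul, g.map_smul]⟩
  id_comp f := OrbHom.ext rfl
  comp_id f := OrbHom.ext rfl
  assoc f g h := OrbHom.ext rfl

variable (G)

/-- The one-point orbit `G/G`, the terminal object of the orbit category. -/
def GOrb.pt : GOrb G where
  α := PUnit
  pretrans := ⟨fun x y => ⟨1, Subsingleton.elim _ _⟩⟩
  nonempty := ⟨PUnit.unit⟩

variable {G}

/-- The unique morphism to the one-point orbit. -/
def toPt (X : GOrb G) : X ⟶ GOrb.pt G :=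
  ⟨fun _ => PUnit.unit, fun _ _ => rfl⟩

instance (X : GOrb G) : Subsingleton (X ⟶ GOrb.pt G) :=
  ⟨fun f g => OrbHom.ext (funext fun _ => rfl)⟩

variable (G)

/-- A family of subgroups of `G`: a nonempty collection of subgroups closed under conjugation
and under passing to subgroups. -/
structure SubgroupFamily where
  carrier : Set (Subgroup G)
  nonempty : carrier.Nonempty
  conj_mem : ∀ (H : Subgroup G) (g : G),
    H ∈ carrier → H.map (MulAut.conj g).toMonoidHom ∈ carrier
  le_mem : ∀ H K : Subgroup G, H ≤ K → K ∈ carrier → H ∈ carrier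

/-- The full subcategory `G_𝓕Orb` of orbits with stabilizers in the family `𝓕`. -/
abbrev FamOrb (𝓕 : SubgroupFamily G) : Type (u + 1) :=
  ObjectProperty.FullSubcategory (fun X : GOrb G => ∀ x : X.α, MulAction.stabilizer G x ∈ 𝓕.carrier)

/-- The category of `Set`-valued presheaves on the orbit category. -/
abbrev PSh := (GOrb G)ᵒᵖ ⥤ Type u

variable {G}

section Assembly

variable {M : Type v'} [Category.{w'} M]

/-- The cocone over `F` restricted to `G_𝓕Orb` with vertex `F(G/G)`. -/
def asmCocone (𝓕 : SubgroupFamily G) (F : GOrb G ⥤ M) :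
    Cocone (ObjectProperty.ι _ ⋙ F :
      FamOrb G 𝓕 ⥤ M) where
  pt := F.obj (GOrb.pt G)
  ι :=
    { app := fun X => F.map (toPt X.obj)
      naturality := fun X Y f => by
        dsimp
        rw [Category.comp_id, ← F.map_comp]
        exact congrArg F.map (Subsingleton.elim _ _) }

/-- The assembly map `colim_{G_𝓕Orb} F ⟶ F(G/G)`. -/
noncomputable def asm (𝓕 : SubgroupFamily G) (F : GOrb G ⥤ M)
    [HasColimit (ObjectProperty.ι _ ⋙ F : FamOrb G 𝓕 ⥤ M)] :
    colimit (ObjectProperty.ι _ ⋙ F : FamOrb G 𝓕 ⥤ M) ⟶ F.obj (GOrb.pt G) :=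
  colimit.desc _ (asmCocone 𝓕 F)

end Assembly

end FJ

namespace FJ

variable {G : Type u} [Group G]

variable (G) in
/-- The transitive `G`-set `G` (left translation). -/
@[reducible] def selfOrb : GOrb G where
  α := G
  pretrans := ⟨fun x y => ⟨y * x⁻¹, by simp [smul_eq_mul]⟩⟩
  nonempty := ⟨1⟩

/-- The group element underlying a morphism in `BG = SingleObj G`. -/
def un {x y : SingleObj G} (g : x ⟶ y) : G := g

variable (G) in
/-- Right multiplication by `g⁻¹`, as an equivariant self-map of the `G`-set `G`. -/
def rmul (g : G) : selfOrb G ⟶ selfOrb G :=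
  ⟨fun a => a * g⁻¹, fun h a => by simp [smul_eq_mul, mul_assoc]⟩

variable (G) in
/-- The canonical inclusion `j^G : BG ⟶ GOrb`, sending the unique object to the `G`-set `G`. -/
def jG : SingleObj G ⥤ GOrb G where
  obj _ := selfOrb G
  map g := rmul G (un g)
  map_id x := OrbHom.ext (funext fun a => by
    have h1 : un (𝟙 x) = 1 := rfl
    show a * (un (𝟙 x))⁻¹ = a
    rw [h1, inv_one, mul_one])
  map_comp {x y z} f g := OrbHom.ext (funext fun a => by
    have h1 : un (f ≫ g) = un g * un f := rfl
    show a * (un (f ≫ g))⁻¹ = (a * (un f)⁻¹) * (un g)⁻¹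
    rw [h1, mul_inv_rev, mul_assoc])

/-- The functor `Bφ : BH ⟶ BG` induced by a group homomorphism. -/
def Bhom {H : Type v} [Group H] (φ : H →* G) : SingleObj H ⥤ SingleObj G :=
  SingleObj.mapHom H G φ

/-- The family `φ*𝓕 = {K ≤ H ∣ φ(K) ∈ 𝓕}` induced by a group homomorphism. -/
def comapFam {H : Type v} [Group H] (φ : H →* G) (𝓕 : SubgroupFamily G) :
    SubgroupFamily H where
  carrier := {K : Subgroup H | K.map φ ∈ 𝓕.carrier}
  nonempty := by
    obtain ⟨S, hS⟩ := 𝓕.nonempty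
    refine ⟨⊥, ?_⟩
    have hbot : (⊥ : Subgroup H).map φ = ⊥ := by simp
    simp only [Set.mem_setOf_eq, hbot]
    exact 𝓕.le_mem ⊥ S bot_le hS
  conj_mem := fun K h hK => by
    simp only [Set.mem_setOf_eq]
    have heq : (K.map (MulAut.conj h).toMonoidHom).map φ =
        (K.map φ).map (MulAut.conj (φ h)).toMonoidHom := by
      rw [Subgroup.map_map, Subgroup.map_map]
      congr 1
      ext x
      simp [MulAut.conj]
    rw [heq]
    exact 𝓕.conj_mem _ (φ h) hK
  le_mem := fun K L h hL => 𝓕.le_mem _ _ (Subgroup.map_mono h) hL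

end FJ

namespace FJ

variable {G H : Type u} [Group G] [Group H]

/-- The relation defining `G ×_φ S`: `(g·φ(h), s) ∼ (g, h·s)`. -/
def indSetoid (φ : H →* G) (S : GOrb H) : Setoid (G × S.α) where
  r p q := ∃ h : H, p.1 = q.1 * φ h ∧ q.2 = h • p.2
  iseqv := by
    constructor
    · intro p
      exact ⟨1, by simp, by simp⟩
    · rintro p q ⟨h, h1, h2⟩
      refine ⟨h⁻¹, ?_, ?_⟩
      · rw [h1]; simp
      · rw [h2]; simp
    · rintro p q r ⟨h, h1, h2⟩ ⟨k, k1, k2⟩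
      refine ⟨k * h, ?_, ?_⟩
      · rw [h1, k1, map_mul, mul_assoc]
      · rw [k2, h2, mul_smul]

instance indAction (φ : H →* G) (S : GOrb H) : MulAction G (Quotient (indSetoid φ S)) where
  smul g := Quotient.map (fun p => (g * p.1, p.2))
    (by rintro p q ⟨h, h1, h2⟩; exact ⟨h, by dsimp only; rw [h1, mul_assoc], h2⟩)
  one_smul x := by
    induction x using Quotient.ind
    exact congrArg (Quotient.mk _) (by simp)
  mul_smul g g' x := by
    induction x using Quotient.ind
    exact congrArg (Quotient.mk _) (by simp [mul_assoc])

lemma indSmul_mk (φ : H →* G) (S : GOrb H) (g : G) (p : G × S.α) :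
    g • (Quotient.mk (indSetoid φ S) p) = Quotient.mk _ (g * p.1, p.2) := rfl

/-- The induced transitive `G`-set `G ×_φ S`. -/
def indObj (φ : H →* G) (S : GOrb H) : GOrb G where
  α := Quotient (indSetoid φ S)
  pretrans := by
    refine ⟨fun x y => ?_⟩
    induction x using Quotient.ind with | _ p =>
    induction y using Quotient.ind with | _ q =>
    obtain ⟨h, hh⟩ := S.pretrans.exists_smul_eq p.2 q.2
    refine ⟨(q.1 * φ h) * p.1⁻¹, ?_⟩
    rw [indSmul_mk]
    refine Quotient.sound ?_
    exact ⟨h, by dsimp only; rw [inv_mul_cancel_right], by dsimp only; rw [hh]⟩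
  nonempty := ⟨Quotient.mk _ (1, S.nonempty.some)⟩

/-- The induction functor on morphisms. -/
def indMap (φ : H →* G) {S T : GOrb H} (f : S ⟶ T) : indObj φ S ⟶ indObj φ T where
  toFun := Quotient.map (fun p => (p.1, f.toFun p.2))
    (by rintro p q ⟨h, h1, h2⟩; exact ⟨h, h1, by dsimp only; rw [h2, f.map_smul]⟩)
  map_smul := by
    rintro g ⟨p⟩
    rfl

/-- The induction functor `G ×_φ - : HOrb ⥤ GOrb` of a group homomorphism `φ : H → G`. -/
def indOrb (φ : H →* G) : GOrb H ⥤ GOrb G where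
  obj := indObj φ
  map := indMap φ
  map_id S := OrbHom.ext (funext (by rintro ⟨p⟩; rfl))
  map_comp f g := OrbHom.ext (funext (by rintro ⟨p⟩; rfl))

/-- The restriction functor `res_φ : PSh(GOrb) ⥤ PSh(HOrb)`, precomposition with the
induction functor. -/
def resPsh (φ : H →* G) : PSh G ⥤ PSh H :=
  (Functor.whiskeringLeft (GOrb H)ᵒᵖ (GOrb G)ᵒᵖ (Type u)).obj (indOrb φ).op

end FJ

namespace FJ

variable {G : Type u} [Group G] {M : Type v'} [Category.{w'} M]

/-- The relative assembly map
`colim_{G_{𝓕'}Orb} F ⟶ colim_{G_𝓕Orb} F` induced by an inclusion `𝓕' ⊆ 𝓕` of families. -/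
noncomputable def relAsm (𝓕' 𝓕 : SubgroupFamily G)
    (hsub : ∀ S : Subgroup G, S ∈ 𝓕'.carrier → S ∈ 𝓕.carrier) (F : GOrb G ⥤ M)
    [HasColimit (ObjectProperty.ι _ ⋙ F : FamOrb G 𝓕' ⥤ M)]
    [HasColimit (ObjectProperty.ι _ ⋙ F : FamOrb G 𝓕 ⥤ M)] :
    colimit (ObjectProperty.ι _ ⋙ F : FamOrb G 𝓕' ⥤ M) ⟶
      colimit (ObjectProperty.ι _ ⋙ F : FamOrb G 𝓕 ⥤ M) :=
  colimit.desc _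
    { pt := colimit (ObjectProperty.ι _ ⋙ F : FamOrb G 𝓕 ⥤ M)
      ι :=
        { app := fun X => colimit.ι (ObjectProperty.ι _ ⋙ F : FamOrb G 𝓕 ⥤ M)
            ⟨X.obj, fun x => hsub _ (X.property x)⟩
          naturality := fun X Y f => by
            dsimp
            rw [Category.comp_id]
            exact colimit.w (ObjectProperty.ι _ ⋙ F : FamOrb G 𝓕 ⥤ M)
              (show (⟨X.obj, fun x => hsub _ (X.property x)⟩ : FamOrb G 𝓕) ⟶
                ⟨Y.obj, fun x => hsub _ (Y.property x)⟩ from ObjectProperty.homMk f.hom) } }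

end FJ

namespace FJ

section Generic

universe w1 w2 w3 w4 v1 v2 v3 v4

variable {C : Type w1} [Category.{v1} C] {D₀ : Type w2} [Category.{v2} D₀]
  {E : Type w3} [Category.{v3} E] {KK : Type w4} [Category.{v4} KK]

/-- Left Kan extensions compose. -/
lemma isLeftKanExtension_comp
    {L1 : C ⥤ D₀} {L2 : D₀ ⥤ E} {F : C ⥤ KK} {F1 : D₀ ⥤ KK} (α : F ⟶ L1 ⋙ F1)
    [F1.IsLeftKanExtension α] {F2 : E ⥤ KK} (γ : F1 ⟶ L2 ⋙ F2)
    [F2.IsLeftKanExtension γ] :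
    F2.IsLeftKanExtension (α ≫ Functor.whiskerLeft L1 γ : F ⟶ (L1 ⋙ L2) ⋙ F2) := by
  constructor
  constructor
  refine IsInitial.ofUniqueHom (fun Y => ?_) (fun Y m => ?_)
  · refine StructuredArrow.homMk
      (F2.descOfIsLeftKanExtension γ Y.right
        (F1.descOfIsLeftKanExtension α (L2 ⋙ Y.right) Y.hom)) ?_
    ext X
    have h2 := F2.descOfIsLeftKanExtension_fac_app γ Y.right
        (F1.descOfIsLeftKanExtension α (L2 ⋙ Y.right) Y.hom) (L1.obj X)
    have h1 := F1.descOfIsLeftKanExtension_fac_app α (L2 ⋙ Y.right) Y.hom X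
    dsimp
    show (α.app X ≫ γ.app (L1.obj X)) ≫ (F2.descOfIsLeftKanExtension γ Y.right
      (F1.descOfIsLeftKanExtension α (L2 ⋙ Y.right) Y.hom)).app (L2.obj (L1.obj X)) = Y.hom.app X
    rw [Category.assoc, h2, h1]
  · have hright : m.right = F2.descOfIsLeftKanExtension γ Y.right
        (F1.descOfIsLeftKanExtension α (L2 ⋙ Y.right) Y.hom) := by
      apply F2.hom_ext_of_isLeftKanExtension γ
      rw [F2.descOfIsLeftKanExtension_fac γ Y.right]
      apply F1.hom_ext_of_isLeftKanExtension α
      rw [F1.descOfIsLeftKanExtension_fac α (L2 ⋙ Y.right) Y.hom]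
      have := StructuredArrow.w m
      ext X
      have hX := congr_app this X
      simp only [NatTrans.comp_app, Functor.whiskerLeft_app] at hX ⊢
      exact (Category.assoc _ _ _).symm.trans hX
    ext1
    · exact hright

end Generic

section Concrete

variable {H G : Type u} [Group H] [Group G] (φ : H →* G)

/-- The component of the natural transformation `Bφ ⋙ jG ⟶ jH ⋙ indφ`. -/
def epsInvApp : selfOrb G ⟶ indObj φ (selfOrb H) where
  toFun g := Quotient.mk _ (g, (1 : H))
  map_smul g a := rfl

/-- The canonical natural transformation `Bφ ⋙ jG ⟶ jH ⋙ indφ` (in fact an isomorphism,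
but we only need the transformation). -/
def epsInv : Bhom φ ⋙ jG G ⟶ jG H ⋙ indOrb φ where
  app _ := epsInvApp φ
  naturality x y h := by
    apply OrbHom.ext
    funext g
    refine Quotient.sound ⟨(un h)⁻¹, ?_, ?_⟩
    · rw [map_inv]; rfl
    · show (1 : H) * (un h)⁻¹ = (un h)⁻¹ • (1 : H)
      rw [smul_eq_mul, mul_one, one_mul]

/-- The stabilizers of induced orbits belong to the family. -/
lemma stabilizer_indObj_mem (𝓕 : SubgroupFamily G) {S : GOrb H}
    (hS : ∀ s : S.α, MulAction.stabilizer H s ∈ (comapFam φ 𝓕).carrier)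
    (x : (indObj φ S).α) : MulAction.stabilizer G x ∈ 𝓕.carrier := by
  induction x using Quotient.ind with | _ p =>
  obtain ⟨g, s⟩ := p
  have key : MulAction.stabilizer G (Quotient.mk (indSetoid φ S) (g, s)) =
      ((MulAction.stabilizer H s).map φ).map (MulAut.conj g).toMonoidHom := by
    ext g'
    simp only [MulAction.mem_stabilizer_iff, Subgroup.mem_map]
    constructor
    · intro h
      rw [indSmul_mk] at h
      obtain ⟨k, hk1, hk2⟩ := Quotient.exact h
      refine ⟨φ k, ⟨k, ?_, rfl⟩, ?_⟩
      · exact hk2.symm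
      · dsimp at hk1 hk2 ⊢
        rw [← hk1]
        group
    · rintro ⟨x, ⟨k, hk, rfl⟩, rfl⟩
      rw [indSmul_mk]
      refine Quotient.sound ⟨k, ?_, hk.symm⟩
      dsimp
      group
  have hmem := 𝓕.conj_mem _ g (hS s)
  rw [← key] at hmem
  exact hmem

/-- The induction functor restricted to the respective families. -/
def famInd (𝓕 : SubgroupFamily G) :
    FamOrb H (comapFam φ 𝓕) ⥤ FamOrb G 𝓕 where
  obj S := ⟨indObj φ S.obj, stabilizer_indObj_mem φ 𝓕 S.property⟩
  map f := ObjectProperty.homMk (indMap φ f.hom)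
  map_id S := ObjectProperty.hom_ext _ ((indOrb φ).map_id S.obj)
  map_comp f g := ObjectProperty.hom_ext _ ((indOrb φ).map_comp f.hom g.hom)

section OrbitDecomp

variable (T : GOrb G)

/-- The relation "being in the same `H`-orbit" (via `φ`) on a `G`-orbit. -/
def relOm : Setoid T.α :=
  ⟨fun x y => ∃ h : H, x = φ h • y,
   ⟨fun x => ⟨1, by simp⟩,
    fun {x y} h => by
      obtain ⟨h, e⟩ := h
      exact ⟨h⁻¹, by rw [e, map_inv, inv_smul_smul]⟩,
    fun {x y z} h h' => by
      obtain ⟨h, e⟩ := h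
      obtain ⟨k, e'⟩ := h'
      exact ⟨h * k, by rw [e, e', map_mul, mul_smul]⟩⟩⟩

/-- The set of `H`-orbits on a `G`-orbit. -/
def Om : Type u := Quotient (relOm φ T)

/-- Class of a point. -/
def OmMk (t : T.α) : Om φ T := Quotient.mk (relOm φ T) t

lemma OmMk_smul (h : H) (t : T.α) : OmMk φ T (φ h • t) = OmMk φ T t :=
  Quotient.sound ⟨h, rfl⟩

instance OorbSMul (ω : Om φ T) : SMul H {x : T.α // OmMk φ T x = ω} :=
  ⟨fun h x => ⟨φ h • x.1, (OmMk_smul φ T h x.1).trans x.2⟩⟩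

instance OorbAct (ω : Om φ T) : MulAction H {x : T.α // OmMk φ T x = ω} where
  one_smul x := Subtype.ext (show φ 1 • x.1 = x.1 by simp)
  mul_smul h k x := Subtype.ext
    (show φ (h * k) • x.1 = φ h • (φ k • x.1) by rw [map_mul, mul_smul])

/-- The `H`-orbit in a `G`-orbit corresponding to `ω`, as a transitive `H`-set. -/
def Oorb (ω : Om φ T) : GOrb H where
  α := {x : T.α // OmMk φ T x = ω}
  act := OorbAct φ T ω
  pretrans := ⟨fun x y => by
    obtain ⟨h, e⟩ := Quotient.exact (x.2.trans y.2.symm)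
    refine ⟨h⁻¹, Subtype.ext ?_⟩
    show φ h⁻¹ • x.1 = y.1
    rw [e, map_inv, inv_smul_smul]⟩
  nonempty := by
    obtain ⟨t, ht⟩ := Quotient.exists_rep ω
    exact ⟨⟨t, ht⟩⟩

lemma Oorb_smul_val (ω : Om φ T) (h : H) (x : (Oorb φ T ω).α) :
    (h • x).1 = φ h • x.1 := rfl

lemma Oorb_stab_mem (𝓕 : SubgroupFamily G) (hT : ∀ t : T.α, MulAction.stabilizer G t ∈ 𝓕.carrier)
    (ω : Om φ T) (x : (Oorb φ T ω).α) :
    MulAction.stabilizer H x ∈ (comapFam φ 𝓕).carrier := by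
  refine 𝓕.le_mem _ (MulAction.stabilizer G x.1) ?_ (hT x.1)
  rintro - ⟨h, hh, rfl⟩
  have : φ h • x.1 = x.1 := congrArg Subtype.val hh
  exact this

/-- Evaluation `G ×_φ (H·t) ⟶ T`. -/
def evMap (ω : Om φ T) : indObj φ (Oorb φ T ω) ⟶ T where
  toFun := Quotient.lift (fun p : G × (Oorb φ T ω).α => p.1 • p.2.1) (by
    rintro ⟨g, x⟩ ⟨g', x'⟩ ⟨h, h1, h2⟩
    dsimp at h1 h2 ⊢
    rw [h1, h2, Oorb_smul_val, mul_smul])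
  map_smul g x := by
    induction x using Quotient.ind with | _ p =>
    show (g * p.1) • p.2.1 = g • (p.1 • p.2.1)
    rw [mul_smul]

/-- The orbit map `H ⟶ H·t`, `a ↦ φ(a)·t`. -/
def uuMap (ω : Om φ T) (t : T.α) (e : OmMk φ T t = ω) : selfOrb H ⟶ Oorb φ T ω where
  toFun a := ⟨φ a • t, by rw [← e]; exact OmMk_smul φ T a t⟩
  map_smul h a := Subtype.ext (by
    show φ (h * a) • t = φ h • (φ a • t)
    rw [map_mul, mul_smul])

/-- Any equivariant map from `H` into an orbit is an orbit map. -/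
lemma uuMap_eq (ω : Om φ T) (g : selfOrb H ⟶ Oorb φ T ω)
    (e : OmMk φ T (g.toFun 1).1 = ω) :
    uuMap φ T ω (g.toFun 1).1 e = g := by
  apply OrbHom.ext
  funext a
  apply Subtype.ext
  show φ a • (g.toFun 1).1 = (g.toFun a).1
  have := g.map_smul a 1
  rw [smul_eq_mul, mul_one] at this
  rw [this]
  rfl

/-- The key compatibility in `GOrb G`. -/
lemma epsInv_ind_ev (f : selfOrb G ⟶ T) (ω : Om φ T) (e : OmMk φ T (f.toFun 1) = ω) :
    epsInvApp φ ≫ indMap φ (uuMap φ T ω (f.toFun 1) e) ≫ evMap φ T ω = f := by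
  apply OrbHom.ext
  funext g
  show g • (φ (1 : H) • f.toFun 1) = f.toFun g
  rw [map_one, one_smul, ← f.map_smul, smul_eq_mul, mul_one]

end OrbitDecomp

section QFun

variable (𝓕 : SubgroupFamily G) (Tfam : FamOrb G 𝓕)

/-- The orbit `H·t` with the evaluation map, as an object of the comma category. -/
def qObj (ω : Om φ Tfam.obj) : CostructuredArrow (famInd φ 𝓕) Tfam :=
  CostructuredArrow.mk
    (show (famInd φ 𝓕).obj
        ⟨Oorb φ Tfam.obj ω, Oorb_stab_mem φ Tfam.obj 𝓕 Tfam.property ω⟩ ⟶ Tfam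
      from ObjectProperty.homMk (evMap φ Tfam.obj ω))

/-- The discrete family of orbits, as a functor to the comma category. -/
def qFun : Discrete (Om φ Tfam.obj) ⥤ CostructuredArrow (famInd φ 𝓕) Tfam :=
  Discrete.functor (qObj φ 𝓕 Tfam)

/-- The underlying value function of an object of the comma category. -/
def dVals (d : CostructuredArrow (famInd φ 𝓕) Tfam) (s : d.left.obj.α) : Tfam.obj.α :=
  d.hom.hom.toFun (Quotient.mk (indSetoid φ d.left.obj) ((1 : G), s))

lemma dVals_smul (d : CostructuredArrow (famInd φ 𝓕) Tfam) (h : H) (s : d.left.obj.α) :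
    dVals φ 𝓕 Tfam d (h • s) = φ h • dVals φ 𝓕 Tfam d s := by
  show d.hom.hom.toFun (Quotient.mk (indSetoid φ d.left.obj) ((1 : G), h • s)) =
    φ h • d.hom.hom.toFun (Quotient.mk (indSetoid φ d.left.obj) ((1 : G), s))
  erw [← d.hom.hom.map_smul]
  congr 1
  erw [indSmul_mk]
  refine Quotient.sound ⟨h⁻¹, ?_, (inv_smul_smul h s).symm⟩
  rw [map_inv]
  group

lemma dVals_class (d : CostructuredArrow (famInd φ 𝓕) Tfam) (s s' : d.left.obj.α) :
    OmMk φ Tfam.obj (dVals φ 𝓕 Tfam d s) = OmMk φ Tfam.obj (dVals φ 𝓕 Tfam d s') := by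
  obtain ⟨h, rfl⟩ := d.left.obj.pretrans.exists_smul_eq s' s
  rw [dVals_smul]
  exact OmMk_smul φ Tfam.obj h _

/-- The underlying orbit map of `dHomTo`. -/
def dOrb (d : CostructuredArrow (famInd φ 𝓕) Tfam) (ω : Om φ Tfam.obj)
    (hω : ∀ s, OmMk φ Tfam.obj (dVals φ 𝓕 Tfam d s) = ω) :
    OrbHom d.left.obj (Oorb φ Tfam.obj ω) where
  toFun s := ⟨dVals φ 𝓕 Tfam d s, hω s⟩
  map_smul h s := Subtype.ext (dVals_smul φ 𝓕 Tfam d h s)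

/-- The canonical morphism from an object of the comma category into the orbit family. -/
def dHomTo (d : CostructuredArrow (famInd φ 𝓕) Tfam) (ω : Om φ Tfam.obj)
    (hω : ∀ s, OmMk φ Tfam.obj (dVals φ 𝓕 Tfam d s) = ω) :
    d ⟶ (qFun φ 𝓕 Tfam).obj ⟨ω⟩ :=
  CostructuredArrow.homMk (ObjectProperty.homMk (dOrb φ 𝓕 Tfam d ω hω))
    (by
      apply ObjectProperty.hom_ext
      apply OrbHom.ext
      funext x
      induction x using Quotient.ind with | _ p =>
      obtain ⟨g, s⟩ := p
      show (indMap φ (dOrb φ 𝓕 Tfam d ω hω) ≫ evMap φ Tfam.obj ω).toFun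
          (Quotient.mk (indSetoid φ d.left.obj) (g, s)) =
        d.hom.hom.toFun (Quotient.mk (indSetoid φ d.left.obj) (g, s))
      have h0 : (indMap φ (dOrb φ 𝓕 Tfam d ω hω) ≫ evMap φ Tfam.obj ω).toFun
          (Quotient.mk (indSetoid φ d.left.obj) (g, s)) = g • dVals φ 𝓕 Tfam d s := rfl
      rw [h0]
      show g • d.hom.hom.toFun (Quotient.mk (indSetoid φ d.left.obj) ((1 : G), s)) =
        d.hom.hom.toFun (Quotient.mk (indSetoid φ d.left.obj) (g, s))
      erw [← d.hom.hom.map_smul, indSmul_mk, mul_one])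

lemma dHom_forced (d : CostructuredArrow (famInd φ 𝓕) Tfam) (ω : Om φ Tfam.obj)
    (m : d ⟶ (qFun φ 𝓕 Tfam).obj ⟨ω⟩) (s : d.left.obj.α) :
    (OrbHom.toFun m.left.hom s).1 = dVals φ 𝓕 Tfam d s := by
  have hw := CostructuredArrow.w m
  have h3 := congrFun (congrArg (fun f => OrbHom.toFun f.hom) hw)
    (Quotient.mk (indSetoid φ d.left.obj) ((1 : G), s))
  show (OrbHom.toFun m.left.hom s).1 = d.hom.hom.toFun (Quotient.mk _ ((1 : G), s))
  rw [← h3]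
  exact (one_smul G _).symm

lemma qFun_final : (qFun φ 𝓕 Tfam).Final := by
  constructor
  intro d
  obtain ⟨s₀⟩ := d.left.obj.nonempty
  haveI : Nonempty (StructuredArrow d (qFun φ 𝓕 Tfam)) :=
    ⟨StructuredArrow.mk
      (dHomTo φ 𝓕 Tfam d (OmMk φ Tfam.obj (dVals φ 𝓕 Tfam d s₀))
        (fun s => dVals_class φ 𝓕 Tfam d s s₀))⟩
  apply zigzag_isConnected
  intro X Y
  obtain ⟨⟨⟨⟩⟩, ⟨ωX⟩, mX⟩ := X
  obtain ⟨⟨⟨⟩⟩, ⟨ωY⟩, mY⟩ := Y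
  have eX : ωX = OmMk φ Tfam.obj (dVals φ 𝓕 Tfam d s₀) := by
    have h2 : OmMk φ Tfam.obj (OrbHom.toFun mX.left.hom s₀).1 = ωX :=
      (OrbHom.toFun mX.left.hom s₀).2
    rw [dHom_forced φ 𝓕 Tfam d ωX mX s₀] at h2
    exact h2.symm
  have eY : ωY = OmMk φ Tfam.obj (dVals φ 𝓕 Tfam d s₀) := by
    have h2 : OmMk φ Tfam.obj (OrbHom.toFun mY.left.hom s₀).1 = ωY :=
      (OrbHom.toFun mY.left.hom s₀).2
    rw [dHom_forced φ 𝓕 Tfam d ωY mY s₀] at h2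
    exact h2.symm
  subst eX
  subst eY
  have : mX = mY := by
    apply CostructuredArrow.hom_ext
    apply ObjectProperty.hom_ext
    apply OrbHom.ext
    funext s
    apply Subtype.ext
    show (OrbHom.toFun mX.left.hom s).1 = (OrbHom.toFun mY.left.hom s).1
    rw [dHom_forced φ 𝓕 Tfam d _ mX s, dHom_forced φ 𝓕 Tfam d _ mY s]
  rw [this]

end QFun

section Kappa

variable {K : Type v} [Category.{w} K]
variable (D : SingleObj H ⥤ K) (DH : GOrb H ⥤ K) (αD : D ⟶ jG H ⋙ DH)
  [DH.IsLeftKanExtension αD]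
variable (Dphi : SingleObj G ⥤ K) (β : D ⟶ Bhom φ ⋙ Dphi) [Dphi.IsLeftKanExtension β]
variable (DphiG : GOrb G ⥤ K) (γ : Dphi ⟶ jG G ⋙ DphiG) [DphiG.IsLeftKanExtension γ]

/-- The unit `D ⟶ (Bφ ⋙ jG) ⋙ DphiG`. -/
def deltaT : D ⟶ (Bhom φ ⋙ jG G) ⋙ DphiG := β ≫ Functor.whiskerLeft (Bhom φ) γ

lemma DphiG_isLKE_W : DphiG.IsLeftKanExtension (deltaT φ D Dphi β DphiG γ) :=
  isLeftKanExtension_comp β γ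

/-- The canonical transformation `DH ⟶ indφ ⋙ DphiG`. -/
noncomputable def kappa : DH ⟶ indOrb φ ⋙ DphiG :=
  DH.descOfIsLeftKanExtension αD (indOrb φ ⋙ DphiG)
    (deltaT φ D Dphi β DphiG γ ≫ Functor.whiskerRight (epsInv φ) DphiG)

lemma kappa_fac_app (x : SingleObj H) :
    αD.app x ≫ (kappa φ D DH αD Dphi β DphiG γ).app (selfOrb H) =
      (deltaT φ D Dphi β DphiG γ).app x ≫ DphiG.map (epsInvApp φ) := by
  have h := DH.descOfIsLeftKanExtension_fac_app αD (indOrb φ ⋙ DphiG)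
    (deltaT φ D Dphi β DphiG γ ≫ Functor.whiskerRight (epsInv φ) DphiG) x
  exact h

lemma uuMap_congr (T : GOrb G) (ω : Om φ T) (t t' : T.α) (htt : t = t')
    (e : OmMk φ T t = ω) (e' : OmMk φ T t' = ω) :
    uuMap φ T ω t e = uuMap φ T ω t' e' := by subst htt; rfl

lemma key_identity (T : GOrb G) (f : selfOrb G ⟶ T) (ω : Om φ T)
    (e : OmMk φ T (f.toFun 1) = ω) (x : SingleObj H) :
    (deltaT φ D Dphi β DphiG γ).app x ≫ DphiG.map f =
      αD.app x ≫ DH.map (uuMap φ T ω (f.toFun 1) e) ≫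
        (kappa φ D DH αD Dphi β DphiG γ).app (Oorb φ T ω) ≫ DphiG.map (evMap φ T ω) := by
  have h2 : DH.map (uuMap φ T ω (f.toFun 1) e) ≫
        (kappa φ D DH αD Dphi β DphiG γ).app (Oorb φ T ω) =
      (kappa φ D DH αD Dphi β DphiG γ).app (selfOrb H) ≫
        DphiG.map (indMap φ (uuMap φ T ω (f.toFun 1) e)) :=
    (kappa φ D DH αD Dphi β DphiG γ).naturality (uuMap φ T ω (f.toFun 1) e)
  conv_lhs => rw [← epsInv_ind_ev φ T f ω e]
  erw [Functor.map_comp, Functor.map_comp]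
  erw [← Category.assoc, ← kappa_fac_app φ D DH αD Dphi β DphiG γ x, Category.assoc]
  erw [← Category.assoc (DH.map _), h2, Category.assoc]
  rfl

end Kappa

section ConeK

variable {K : Type v} [Category.{w} K] [HasColimitsOfSize.{u, u + 1} K]
variable (𝓕 : SubgroupFamily G)
variable (D : SingleObj H ⥤ K) (DH : GOrb H ⥤ K) (αD : D ⟶ jG H ⋙ DH)
  [DH.IsLeftKanExtension αD]
variable (Dphi : SingleObj G ⥤ K) (β : D ⟶ Bhom φ ⋙ Dphi) [Dphi.IsLeftKanExtension β]
variable (DphiG : GOrb G ⥤ K) (γ : Dphi ⟶ jG G ⋙ DphiG) [DphiG.IsLeftKanExtension γ]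
variable (Tfam : FamOrb G 𝓕)

/-- The diagram of orbits. -/
noncomputable abbrev orbDiagram : Discrete (Om φ Tfam.obj) ⥤ K :=
  qFun φ 𝓕 Tfam ⋙ CostructuredArrow.proj (famInd φ 𝓕) Tfam ⋙
    ObjectProperty.ι _ ⋙ DH

/-- The cocone exhibiting `DphiG(T)` as the coproduct of the `DH`-values of the orbits. -/
noncomputable def coconeK : Cocone (orbDiagram φ 𝓕 DH Tfam) where
  pt := DphiG.obj Tfam.obj
  ι :=
    { app := fun ω => (kappa φ D DH αD Dphi β DphiG γ).app (Oorb φ Tfam.obj ω.as) ≫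
        DphiG.map (evMap φ Tfam.obj ω.as)
      naturality := fun ω ω' f => by
        obtain ⟨ω⟩ := ω
        obtain ⟨ω'⟩ := ω'
        obtain rfl : ω = ω' := Discrete.eq_of_hom f
        rw [Subsingleton.elim f (𝟙 _)]
        simp }

/-- A leg for a cocone over the comma category of `W = Bφ ⋙ jG` over `T`. -/
noncomputable def legF (s : Cocone (orbDiagram φ 𝓕 DH Tfam)) (ω : Om φ Tfam.obj)
    (t : Tfam.obj.α) (e : OmMk φ Tfam.obj t = ω) (x : SingleObj H) :
    D.obj x ⟶ s.pt :=
  αD.app x ≫ DH.map (uuMap φ Tfam.obj ω t e) ≫ s.ι.app ⟨ω⟩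

lemma legF_congr (s : Cocone (orbDiagram φ 𝓕 DH Tfam)) (ω ω' : Om φ Tfam.obj)
    (hh : ω = ω') (t : Tfam.obj.α) (e : OmMk φ Tfam.obj t = ω) (e' : OmMk φ Tfam.obj t = ω')
    (x : SingleObj H) :
    legF φ 𝓕 D DH αD Tfam s ω t e x = legF φ 𝓕 D DH αD Tfam s ω' t e' x := by
  subst hh; rfl

lemma legF_rel (s : Cocone (orbDiagram φ 𝓕 DH Tfam)) (ω : Om φ Tfam.obj)
    (t' : Tfam.obj.α) {x y : SingleObj H} (h : x ⟶ y)
    (e1 : OmMk φ Tfam.obj t' = ω) (e2 : OmMk φ Tfam.obj ((φ (un h))⁻¹ • t') = ω) :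
    D.map h ≫ legF φ 𝓕 D DH αD Tfam s ω t' e1 y =
      legF φ 𝓕 D DH αD Tfam s ω ((φ (un h))⁻¹ • t') e2 x := by
  have huu : rmul H (un h) ≫ uuMap φ Tfam.obj ω t' e1 =
      uuMap φ Tfam.obj ω ((φ (un h))⁻¹ • t') e2 := by
    apply OrbHom.ext
    funext a
    apply Subtype.ext
    show φ (a * (un h)⁻¹) • t' = φ a • ((φ (un h))⁻¹ • t')
    rw [map_mul, map_inv, mul_smul]
  unfold legF
  erw [← huu, Functor.map_comp]
  rw [← Category.assoc, αD.naturality h]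
  simp only [Category.assoc]
  erw [Category.assoc]
  rfl

/-- The induced cocone over the comma category of `W` over `T`. -/
noncomputable def coconeD (s : Cocone (orbDiagram φ 𝓕 DH Tfam)) :
    Cocone (CostructuredArrow.proj (Bhom φ ⋙ jG G) Tfam.obj ⋙ D) where
  pt := s.pt
  ι :=
    { app := fun g => legF φ 𝓕 D DH αD Tfam s (OmMk φ Tfam.obj (g.hom.toFun (1 : G)))
        (g.hom.toFun (1 : G)) rfl g.left
      naturality := fun g g' ψ => by
        dsimp
        rw [Category.comp_id]
        have hw := CostructuredArrow.w ψ
        have ht : g.hom.toFun (1 : G) = (φ (un ψ.left))⁻¹ • g'.hom.toFun (1 : G) := by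
          conv_lhs => rw [← hw]
          show g'.hom.toFun ((1 : G) * (φ (un ψ.left))⁻¹) = _
          erw [← g'.hom.map_smul]
          congr 1
          erw [smul_eq_mul, one_mul, mul_one]
        have e2 : OmMk φ Tfam.obj ((φ (un ψ.left))⁻¹ • g'.hom.toFun (1 : G)) =
            OmMk φ Tfam.obj (g'.hom.toFun (1 : G)) := by
          refine Quotient.sound ⟨(un ψ.left)⁻¹, ?_⟩
          rw [map_inv]
        rw [ht]
        rw [legF_congr φ 𝓕 D DH αD Tfam s _ _ e2 _ rfl e2]
        exact legF_rel φ 𝓕 D DH αD Tfam s _ _ ψ.left rfl e2 }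

/-- `coconeK` is a colimit: `DphiG(T)` is the coproduct of the orbit values. -/
noncomputable def coconeKIsColimit :
    IsColimit (coconeK φ 𝓕 D DH αD Dphi β DphiG γ Tfam) := by
  haveI := DphiG_isLKE_W φ D Dphi β DphiG γ
  haveI hcs : HasColimitsOfSize.{u, u} K := hasColimitsOfSizeShrink.{u, u, u, u+1} K
  haveI h1 : (Bhom φ ⋙ jG G).HasPointwiseLeftKanExtension D := fun Y => inferInstance
  haveI h2 : (jG H).HasPointwiseLeftKanExtension D := fun Y => inferInstance
  have cb : ∀ Y, IsColimit ((Functor.LeftExtension.mk DphiG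
      (deltaT φ D Dphi β DphiG γ)).coconeAt Y) :=
    Functor.isPointwiseLeftKanExtensionOfIsLeftKanExtension DphiG
    (deltaT φ D Dphi β DphiG γ)
  have cc : ∀ Y, IsColimit ((Functor.LeftExtension.mk DH αD).coconeAt Y) :=
    Functor.isPointwiseLeftKanExtensionOfIsLeftKanExtension DH αD
  refine ⟨fun s => (cb Tfam.obj).desc (coconeD φ 𝓕 D DH αD Tfam s), ?_, ?_⟩
  · intro s ω
    obtain ⟨ω⟩ := ω
    apply (cc (Oorb φ Tfam.obj ω)).hom_ext
    intro g
    have e0 : OmMk φ Tfam.obj (OrbHom.toFun g.hom (1 : H)).1 = ω :=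
      (OrbHom.toFun g.hom (1 : H)).2
    set f0 : (Bhom φ ⋙ jG G).obj g.left ⟶ Tfam.obj :=
      epsInvApp φ ≫ indMap φ g.hom ≫ evMap φ Tfam.obj ω with hf0
    have hval : f0.toFun (1 : G) = (OrbHom.toFun g.hom (1 : H)).1 := one_smul G _
    have e0' : OmMk φ Tfam.obj (f0.toFun (1 : G)) = ω := by rw [hval]; exact e0
    have huu : uuMap φ Tfam.obj ω (f0.toFun (1 : G)) e0' = g.hom :=
      (uuMap_congr φ Tfam.obj ω _ _ hval e0' e0).trans (uuMap_eq φ Tfam.obj ω g.hom e0)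
    have kid := key_identity φ D DH αD Dphi β DphiG γ Tfam.obj f0 ω e0' g.left
    rw [huu] at kid
    have hleg : (coconeD φ 𝓕 D DH αD Tfam s).ι.app (CostructuredArrow.mk (Y := g.left) f0) =
        αD.app g.left ≫ DH.map g.hom ≫ s.ι.app ⟨ω⟩ := by
      show legF φ 𝓕 D DH αD Tfam s (OmMk φ Tfam.obj (f0.toFun (1 : G)))
        (f0.toFun (1 : G)) rfl g.left = _
      rw [legF_congr φ 𝓕 D DH αD Tfam s _ _ e0' _ rfl e0']
      show αD.app g.left ≫ DH.map (uuMap φ Tfam.obj ω (f0.toFun (1 : G)) e0') ≫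
        s.ι.app ⟨ω⟩ = _
      rw [huu]
    have hfac := (cb Tfam.obj).fac (coconeD φ 𝓕 D DH αD Tfam s)
      (CostructuredArrow.mk (Y := g.left) f0)
    rw [hleg] at hfac
    simp only [Functor.LeftExtension.coconeAt_ι_app, Functor.LeftExtension.mk_right,
      Functor.LeftExtension.mk_hom, CostructuredArrow.mk_left, CostructuredArrow.mk_hom_eq_self,
      Category.assoc] at hfac
    erw [kid] at hfac
    simp only [Functor.LeftExtension.coconeAt_ι_app, Functor.LeftExtension.mk_right,
      Functor.LeftExtension.mk_hom, coconeK, Category.assoc]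
    refine (Category.assoc _ _ _).trans ?_
    refine Eq.trans ?_ (hfac.trans (Category.assoc _ _ _).symm)
    exact ((Category.assoc _ _ _).trans (congrArg (_ ≫ ·) (Category.assoc _ _ _))).symm
  · intro s m hm
    refine (cb Tfam.obj).uniq (coconeD φ 𝓕 D DH αD Tfam s) m (fun g => ?_)
    have kid := key_identity φ D DH αD Dphi β DphiG γ Tfam.obj g.hom
      (OmMk φ Tfam.obj (g.hom.toFun (1 : G))) rfl g.left
    have hm' := hm ⟨OmMk φ Tfam.obj (g.hom.toFun (1 : G))⟩
    simp only [coconeK, Category.assoc] at hm'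
    simp only [Functor.LeftExtension.coconeAt_ι_app, Functor.LeftExtension.mk_right,
      Functor.LeftExtension.mk_hom, Category.assoc]
    erw [kid, Category.assoc (αD.app g.left), Category.assoc (DH.map _), hm']
    rfl
end ConeK


section Assemble

variable {K : Type v} [Category.{w} K] [HasColimitsOfSize.{u, u + 1} K]
variable {M : Type v'} [Category.{w'} M] [HasColimitsOfSize.{u, u + 1} M]
variable (F : K ⥤ M)
variable (𝓕 : SubgroupFamily G)
variable (D : SingleObj H ⥤ K) (DH : GOrb H ⥤ K) (αD : D ⟶ jG H ⋙ DH)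
  [DH.IsLeftKanExtension αD]
variable (Dphi : SingleObj G ⥤ K) (β : D ⟶ Bhom φ ⋙ Dphi) [Dphi.IsLeftKanExtension β]
variable (DphiG : GOrb G ⥤ K) (γ : Dphi ⟶ jG G ⋙ DphiG) [DphiG.IsLeftKanExtension γ]

/-- The unit exhibiting the `G`-side functor as an extension of the `H`-side functor. -/
noncomputable def uBar :
    (ObjectProperty.ι _ ⋙ (DH ⋙ F) : FamOrb H (comapFam φ 𝓕) ⥤ M) ⟶
      famInd φ 𝓕 ⋙ (ObjectProperty.ι _ ⋙ (DphiG ⋙ F) : FamOrb G 𝓕 ⥤ M) where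
  app S := F.map ((kappa φ D DH αD Dphi β DphiG γ).app S.obj)
  naturality S S' f := by
    dsimp
    erw [← F.map_comp, ← F.map_comp]
    congr 1
    exact (kappa φ D DH αD Dphi β DphiG γ).naturality f.hom

/-- The extension is a pointwise left Kan extension. -/
noncomputable def QPointwise [∀ J : Type u, PreservesColimitsOfShape (Discrete J) F] :
    (Functor.LeftExtension.mk
      (ObjectProperty.ι _ ⋙ (DphiG ⋙ F) : FamOrb G 𝓕 ⥤ M)
      (uBar φ F 𝓕 D DH αD Dphi β DphiG γ)).IsPointwiseLeftKanExtension := by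
  intro Tfam
  haveI := qFun_final φ 𝓕 Tfam
  have hK := coconeKIsColimit φ 𝓕 D DH αD Dphi β DphiG γ Tfam
  have hFK := isColimitOfPreserves F hK
  exact (Functor.Final.isColimitWhiskerEquiv (qFun φ 𝓕 Tfam) _)
    (IsColimit.ofIsoColimit hFK (Cocones.ext (Iso.refl _) (fun ω => by
      dsimp [coconeK, uBar, qFun, qObj]
      erw [Category.comp_id, F.map_comp]
      rfl)))

lemma Q_isLKE [∀ J : Type u, PreservesColimitsOfShape (Discrete J) F] :
    (ObjectProperty.ι _ ⋙ (DphiG ⋙ F) : FamOrb G 𝓕 ⥤ M).IsLeftKanExtension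
      (uBar φ F 𝓕 D DH αD Dphi β DphiG γ) :=
  Functor.LeftExtension.IsPointwiseLeftKanExtension.isLeftKanExtension
    (QPointwise φ F 𝓕 D DH αD Dphi β DphiG γ)

end Assemble

end Concrete


end FJ

namespace FJ

/-- for a group homomorphism `φ : H → G` and a family `𝓕` of subgroups of `G`,
the assembly map `As_{φ*𝓕, FD_H}` is isomorphic in the arrow category to the assembly map
`As_{𝓕, F(Bφ_!D)_G}`. -/
theorem statement12 {H G : Type u} [Group H] [Group G] (φ : H →* G)
    (𝓕 : SubgroupFamily G)
    {K : Type v} [Category.{w} K] [HasColimitsOfSize.{u, u + 1} K]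
    {M : Type v'} [Category.{w'} M] [HasColimitsOfSize.{u, u + 1} M]
    (F : K ⥤ M) [∀ J : Type u, PreservesColimitsOfShape (Discrete J) F]
    (D : SingleObj H ⥤ K)
    -- `D_H`: a left Kan extension of `D` along `j^H`
    (DH : GOrb H ⥤ K) (αD : D ⟶ jG H ⋙ DH) [DH.IsLeftKanExtension αD]
    -- `Bφ_!D`: a left Kan extension of `D` along `Bφ`
    (Dphi : SingleObj G ⥤ K) (β : D ⟶ Bhom φ ⋙ Dphi) [Dphi.IsLeftKanExtension β]
    -- `(Bφ_!D)_G`: a left Kan extension of `Bφ_!D` along `j^G`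
    (DphiG : GOrb G ⥤ K) (γ : Dphi ⟶ jG G ⋙ DphiG) [DphiG.IsLeftKanExtension γ] :
    Nonempty (Arrow.mk (asm (comapFam φ 𝓕) (DH ⋙ F)) ≅ Arrow.mk (asm 𝓕 (DphiG ⋙ F))) := by
  haveI hcsK : HasColimitsOfSize.{u, u} K := hasColimitsOfSizeShrink.{u, u, u, u + 1} K
  haveI hcsK0 : HasColimitsOfSize.{u, 0} K := hasColimitsOfSizeShrink.{u, 0, u, u + 1} K
  haveI hQ := Q_isLKE φ F 𝓕 D DH αD Dphi β DphiG γ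
  -- the top isomorphism between the colimits
  let tIso := Functor.colimitIsoOfIsLeftKanExtension
    (ObjectProperty.ι _ ⋙ (DphiG ⋙ F) : FamOrb G 𝓕 ⥤ M)
    (uBar φ F 𝓕 D DH αD Dphi β DphiG γ)
  -- the bottom morphism
  let b0 : DH.obj (GOrb.pt H) ⟶ DphiG.obj (GOrb.pt G) :=
    (kappa φ D DH αD Dphi β DphiG γ).app (GOrb.pt H) ≫
      DphiG.map (toPt (indObj φ (GOrb.pt H)))
  -- terminal objects
  have tH : IsTerminal (GOrb.pt H) :=
    IsTerminal.ofUniqueHom (fun X => toPt X) (fun X m => Subsingleton.elim m (toPt X))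
  have tG : IsTerminal (GOrb.pt G) :=
    IsTerminal.ofUniqueHom (fun X => toPt X) (fun X m => Subsingleton.elim m (toPt X))
  -- comparison maps from `colimit D`
  have hdescH : IsIso (colimit.desc DH (coconeOfDiagramTerminal tH DH)) := by
    have : colimit.desc DH (coconeOfDiagramTerminal tH DH) =
        (IsColimit.coconePointUniqueUpToIso (colimit.isColimit DH)
          (colimitOfDiagramTerminal tH DH)).hom := rfl
    rw [this]
    infer_instance
  have hdescG : IsIso (colimit.desc DphiG (coconeOfDiagramTerminal tG DphiG)) := by
    have : colimit.desc DphiG (coconeOfDiagramTerminal tG DphiG) =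
        (IsColimit.coconePointUniqueUpToIso (colimit.isColimit DphiG)
          (colimitOfDiagramTerminal tG DphiG)).hom := rfl
    rw [this]
    infer_instance
  let P : colimit D ⟶ DH.obj (GOrb.pt H) :=
    (DH.colimitIsoOfIsLeftKanExtension αD).inv ≫
      colimit.desc DH (coconeOfDiagramTerminal tH DH)
  let PG : colimit D ⟶ DphiG.obj (GOrb.pt G) :=
    (Dphi.colimitIsoOfIsLeftKanExtension β).inv ≫
      (DphiG.colimitIsoOfIsLeftKanExtension γ).inv ≫
        colimit.desc DphiG (coconeOfDiagramTerminal tG DphiG)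
  have hP : IsIso P := by unfold P; infer_instance
  have hPG : IsIso PG := by unfold PG; infer_instance
  have claim : P ≫ b0 = PG := by
    apply colimit.hom_ext
    intro x
    unfold P PG b0
    simp only [Category.assoc, Functor.ι_colimitIsoOfIsLeftKanExtension_inv_assoc,
      colimit.ι_desc_assoc, colimit.ι_desc, coconeOfDiagramTerminal_ι_app]
    -- LHS : αD.app x ≫ DH.map (tH.from _) ≫ κ.app (pt H) ≫ DphiG.map (toPt _)
    -- RHS : β.app x ≫ γ.app _ ≫ DphiG.map (tG.from _)
    have hnat : DH.map (tH.from ((jG H).obj x)) ≫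
          (kappa φ D DH αD Dphi β DphiG γ).app (GOrb.pt H) =
        (kappa φ D DH αD Dphi β DphiG γ).app ((jG H).obj x) ≫
          DphiG.map (indMap φ (tH.from ((jG H).obj x))) :=
      (kappa φ D DH αD Dphi β DphiG γ).naturality _
    erw [← Category.assoc (DH.map _), hnat, Category.assoc]
    have hfac : αD.app x ≫ (kappa φ D DH αD Dphi β DphiG γ).app ((jG H).obj x) =
        (deltaT φ D Dphi β DphiG γ).app x ≫ DphiG.map (epsInvApp φ) :=
      DH.descOfIsLeftKanExtension_fac_app αD (indOrb φ ⋙ DphiG)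
        (deltaT φ D Dphi β DphiG γ ≫ Functor.whiskerRight (epsInv φ) DphiG) x
    erw [← Category.assoc (αD.app x), hfac, Category.assoc]
    have hcomb : DphiG.map (epsInvApp φ) ≫ DphiG.map (indMap φ (tH.from ((jG H).obj x))) ≫
          DphiG.map (toPt (indObj φ (GOrb.pt H))) =
        DphiG.map (tG.from ((jG G).obj ((Bhom φ).obj x))) := by
      rw [← Functor.map_comp, ← Functor.map_comp]
      exact congrArg DphiG.map (Subsingleton.elim _ _)
    erw [hcomb]
    simp only [deltaT, NatTrans.comp_app, Functor.whiskerLeft_app, Category.assoc]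
  have hPb : IsIso (P ≫ b0) := by rw [claim]; exact hPG
  have hb0 : IsIso b0 := IsIso.of_isIso_comp_left P b0
  haveI : IsIso (F.map b0) := inferInstance
  -- the square
  refine ⟨Arrow.isoMk (asIso tIso.inv) (asIso (F.map b0)) ?_⟩
  show tIso.inv ≫ asm 𝓕 (DphiG ⋙ F) = asm (comapFam φ 𝓕) (DH ⋙ F) ≫ F.map b0
  apply colimit.hom_ext
  intro S
  unfold tIso b0
  rw [Functor.ι_colimitIsoOfIsLeftKanExtension_inv_assoc]
  show (uBar φ F 𝓕 D DH αD Dphi β DphiG γ).app S ≫ _ ≫ colimit.desc _ _ =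
    colimit.ι _ S ≫ colimit.desc _ _ ≫ _
  erw [colimit.ι_desc, colimit.ι_desc_assoc]
  show F.map ((kappa φ D DH αD Dphi β DphiG γ).app S.obj) ≫
      (DphiG ⋙ F).map (toPt (indObj φ S.obj)) =
    (DH ⋙ F).map (toPt S.obj) ≫
      F.map ((kappa φ D DH αD Dphi β DphiG γ).app (GOrb.pt H) ≫
        DphiG.map (toPt (indObj φ (GOrb.pt H))))
  erw [Functor.comp_map, Functor.comp_map, ← F.map_comp, ← F.map_comp]
  congr 1
  have hnat : DH.map (toPt S.obj) ≫ (kappa φ D DH αD Dphi β DphiG γ).app (GOrb.pt H) =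
      (kappa φ D DH αD Dphi β DphiG γ).app S.obj ≫ DphiG.map (indMap φ (toPt S.obj)) :=
    (kappa φ D DH αD Dphi β DphiG γ).naturality _
  erw [← Category.assoc (DH.map _), hnat, Category.assoc, ← Functor.map_comp]
  exact congrArg (fun u => (kappa φ D DH αD Dphi β DphiG γ).app S.obj ≫ DphiG.map u)
    (Subsingleton.elim _ _)


end FJ
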